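/- arXiv:2410.09728 — 2 statements merged into one kernel-verified Lean document; each statement's English description precedes it below -/
import Mathlib

section
/- Two softmax policies are close in total variation when their parameters are close: if ‖∇_θ f_θ(s,a)‖ ≤ L₁ for all θ, s, a, then for any parameters θ, θ' and any state s, (1/2) ∑_{a∈A} |π_θ(a|s) − π_{θ'}(a|s)| ≤ L₁ ‖θ − θ'‖. -/
open Finset

/-- Softmax policy with function approximation: π_θ(a|s) ∝ exp(f_θ(s,a)). -/
noncomputable def fapolicy {S A : Type*} [Fintype A] {n : ℕ}
    (f : S → A → EuclideanSpace ℝ (Fin n) → ℝ)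
    (θ : EuclideanSpace ℝ (Fin n)) (s : S) (a : A) : ℝ :=
  Real.exp (f s a θ) / ∑ a', Real.exp (f s a' θ)

/-- Key softmax TV bound: if `|ε a| ≤ M` for all `a`, then the ℓ¹ distance between
`softmax g` and `softmax (g + ε)` is at most `2 * M`. Proved by the mean value theorem
along the interpolation `t ↦ σ·softmax (g + t ε)` for a fixed sign vector `σ`. -/
lemma softmax_l1_bound {A : Type*} [Fintype A] [Nonempty A]
    (g ε : A → ℝ) (M : ℝ) (hε : ∀ a, |ε a| ≤ M) :
    ∑ a, |Real.exp (g a + ε a) / (∑ b, Real.exp (g b + ε b)) -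
      Real.exp (g a) / (∑ b, Real.exp (g b))| ≤ 2 * M := by
  classical
  set σ : A → ℝ := fun a =>
    if 0 ≤ Real.exp (g a + ε a) / (∑ b, Real.exp (g b + ε b)) -
        Real.exp (g a) / (∑ b, Real.exp (g b)) then 1 else -1 with hσ
  have hσ1 : ∀ a, |σ a| = 1 := by
    intro a; simp only [hσ]; split <;> simp
  -- numerator, denominator and their derivatives
  set N : ℝ → ℝ := fun t => ∑ a, σ a * Real.exp (g a + t * ε a) with hN
  set D : ℝ → ℝ := fun t => ∑ a, Real.exp (g a + t * ε a) with hD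
  set N' : ℝ → ℝ := fun t => ∑ a, σ a * (ε a * Real.exp (g a + t * ε a)) with hN'
  set D' : ℝ → ℝ := fun t => ∑ a, ε a * Real.exp (g a + t * ε a) with hD'
  have hDpos : ∀ t, 0 < D t := fun t =>
    Finset.sum_pos (fun a _ => Real.exp_pos _) Finset.univ_nonempty
  have hM0 : 0 ≤ M := le_trans (abs_nonneg _) (hε (Classical.arbitrary A))
  have hNderiv : ∀ t, HasDerivAt N (N' t) t := by
    intro t
    apply HasDerivAt.fun_sum
    intro a _
    have h1 : HasDerivAt (fun t : ℝ => g a + t * ε a) (ε a) t := by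
      simpa using ((hasDerivAt_id t).mul_const (ε a)).const_add (g a)
    have h2 := h1.exp
    simpa [mul_comm, mul_left_comm] using h2.const_mul (σ a)
  have hDderiv : ∀ t, HasDerivAt D (D' t) t := by
    intro t
    apply HasDerivAt.fun_sum
    intro a _
    have h1 : HasDerivAt (fun t : ℝ => g a + t * ε a) (ε a) t := by
      simpa using ((hasDerivAt_id t).mul_const (ε a)).const_add (g a)
    simpa [mul_comm] using h1.exp
  set φ : ℝ → ℝ := fun t => N t / D t with hφ
  set φ' : ℝ → ℝ := fun t => (N' t * D t - N t * D' t) / (D t) ^ 2 with hφ'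
  have hφderiv : ∀ t : ℝ, HasDerivAt φ (φ' t) t := fun t =>
    (hNderiv t).div (hDderiv t) (ne_of_gt (hDpos t))
  -- bounds on |N|, |N'|, |D'|
  have hNb : ∀ t, |N t| ≤ D t := by
    intro t
    calc |N t| ≤ ∑ a, |σ a * Real.exp (g a + t * ε a)| := Finset.abs_sum_le_sum_abs _ _
      _ = ∑ a, Real.exp (g a + t * ε a) := by
          apply Finset.sum_congr rfl; intro a _
          rw [abs_mul, hσ1, one_mul, abs_of_pos (Real.exp_pos _)]
      _ = D t := rfl
  have hN'b : ∀ t, |N' t| ≤ M * D t := by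
    intro t
    calc |N' t| ≤ ∑ a, |σ a * (ε a * Real.exp (g a + t * ε a))| :=
          Finset.abs_sum_le_sum_abs _ _
      _ ≤ ∑ a, M * Real.exp (g a + t * ε a) := by
          apply Finset.sum_le_sum; intro a _
          rw [abs_mul, hσ1, one_mul, abs_mul, abs_of_pos (Real.exp_pos _)]
          exact mul_le_mul_of_nonneg_right (hε a) (Real.exp_pos _).le
      _ = M * D t := by rw [hD, Finset.mul_sum]
  have hD'b : ∀ t, |D' t| ≤ M * D t := by
    intro t
    calc |D' t| ≤ ∑ a, |ε a * Real.exp (g a + t * ε a)| := Finset.abs_sum_le_sum_abs _ _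
      _ ≤ ∑ a, M * Real.exp (g a + t * ε a) := by
          apply Finset.sum_le_sum; intro a _
          rw [abs_mul, abs_of_pos (Real.exp_pos _)]
          exact mul_le_mul_of_nonneg_right (hε a) (Real.exp_pos _).le
      _ = M * D t := by rw [hD, Finset.mul_sum]
  have hφ'b : ∀ t, ‖φ' t‖ ≤ 2 * M := by
    intro t
    have hD2 : (0:ℝ) < (D t) ^ 2 := pow_pos (hDpos t) 2
    rw [Real.norm_eq_abs, hφ', abs_div, abs_of_pos hD2, div_le_iff₀ hD2]
    calc |N' t * D t - N t * D' t| ≤ |N' t * D t| + |N t * D' t| := abs_sub _ _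
      _ = |N' t| * |D t| + |N t| * |D' t| := by rw [abs_mul, abs_mul]
      _ ≤ (M * D t) * D t + D t * (M * D t) := by
          apply add_le_add
          · exact mul_le_mul (hN'b t) (le_of_eq (abs_of_pos (hDpos t))) (abs_nonneg _)
              (mul_nonneg hM0 (hDpos t).le)
          · exact mul_le_mul (hNb t) (hD'b t) (abs_nonneg _) (hDpos t).le
      _ = 2 * M * (D t) ^ 2 := by ring
  -- mean value theorem on [0,1] (in fact on all of ℝ)
  have hMVT : ‖φ 1 - φ 0‖ ≤ 2 * M * ‖(1:ℝ) - 0‖ := by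
    apply Convex.norm_image_sub_le_of_norm_hasDerivWithin_le
      (f' := φ') (s := Set.univ)
      (fun x _ => (hφderiv x).hasDerivWithinAt) (fun x _ => hφ'b x)
      convex_univ (Set.mem_univ _) (Set.mem_univ _)
  have h10 : φ 1 - φ 0 = ∑ a, |Real.exp (g a + ε a) / (∑ b, Real.exp (g b + ε b)) -
      Real.exp (g a) / (∑ b, Real.exp (g b))| := by
    have e1 : φ 1 = ∑ a, σ a * (Real.exp (g a + ε a) / (∑ b, Real.exp (g b + ε b))) := by
      simp only [hφ, hN, hD, one_mul]
      rw [Finset.sum_div]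
      exact Finset.sum_congr rfl fun a _ => by rw [mul_div_assoc]
    have e0 : φ 0 = ∑ a, σ a * (Real.exp (g a) / (∑ b, Real.exp (g b))) := by
      simp only [hφ, hN, hD, zero_mul, add_zero]
      rw [Finset.sum_div]
      exact Finset.sum_congr rfl fun a _ => by rw [mul_div_assoc]
    rw [e1, e0, ← Finset.sum_sub_distrib]
    apply Finset.sum_congr rfl
    intro a _
    rw [← mul_sub]
    rcases le_or_gt 0 (Real.exp (g a + ε a) / (∑ b, Real.exp (g b + ε b)) -
        Real.exp (g a) / (∑ b, Real.exp (g b))) with h | h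
    · rw [abs_of_nonneg h, hσ]; simp [h]
    · rw [abs_of_neg h, hσ]; simp [not_le.mpr h]
  rw [h10, Real.norm_eq_abs] at hMVT
  have h2 : ‖(1:ℝ) - 0‖ = 1 := by norm_num
  rw [h2, mul_one] at hMVT
  exact le_trans (le_abs_self _) hMVT

/-- Total-variation Lipschitz bound in the parameter:
(1/2)∑_a |π_θ(a|s) − π_{θ'}(a|s)| ≤ L₁ ‖θ − θ'‖. -/
theorem softmax_fa_tv_lipschitz {S A : Type*} [Fintype A] [Nonempty A] {n : ℕ}
    (f : S → A → EuclideanSpace ℝ (Fin n) → ℝ) (L₁ : ℝ)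
    (hdiff : ∀ s a, Differentiable ℝ (f s a))
    (hL : ∀ s a θ, ‖fderiv ℝ (f s a) θ‖ ≤ L₁)
    (θ θ' : EuclideanSpace ℝ (Fin n)) (s : S) :
    (1 / 2) * ∑ a, |fapolicy f θ s a - fapolicy f θ' s a| ≤ L₁ * ‖θ - θ'‖ := by
  set g : A → ℝ := fun a => f s a θ' with hg
  set ε : A → ℝ := fun a => f s a θ - f s a θ' with hε
  set M : ℝ := L₁ * ‖θ - θ'‖ with hM
  have hεb : ∀ a, |ε a| ≤ M := by
    intro a
    have := Convex.norm_image_sub_le_of_norm_fderiv_le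
      (f := f s a) (s := Set.univ) (C := L₁)
      (fun x _ => (hdiff s a).differentiableAt) (fun x _ => hL s a x)
      convex_univ (Set.mem_univ θ') (Set.mem_univ θ)
    simpa [hε, hM, Real.norm_eq_abs] using this
  have key := softmax_l1_bound g ε M hεb
  have hsum : ∑ a, |fapolicy f θ s a - fapolicy f θ' s a| =
      ∑ a, |Real.exp (g a + ε a) / (∑ b, Real.exp (g b + ε b)) -
        Real.exp (g a) / (∑ b, Real.exp (g b))| := by
    apply Finset.sum_congr rfl
    intro a _
    have h1 : ∀ b : A, g b + ε b = f s b θ := fun b => by simp [hg, hε]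
    simp only [fapolicy, h1, hg, hε, add_sub_cancel]
  rw [hsum]
  linarith
end

section
/- Let π, π' be policies on a finite MDP, A^π the advantage of π with |A^π(s,a)| ≤ A_max, γ ∈ (0,1), and suppose the visitation distribution satisfies ν^π(s) ≥ ε > 0 for all s. Then J(π') − J(π) ≥ (1/(1−γ)) E_{s∼ν^π, a∼π'(·|s)}[A^π(s,a)] − (2γA_max/((1−γ)²ε)) · E_{s∼ν^π}[D_KL(π(·|s) ‖ π'(·|s))]. -/
open Finset Matrix

set_option linter.unusedSectionVars false
set_option linter.unusedVariables false

private lemma keyF (t : ℝ) (ht : 0 < t) :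
    3*(t-1)^2/(2*t+4) ≤ t * Real.log t - t + 1 := by
  set F : ℝ → ℝ := fun t => t * Real.log t - t + 1 - 3*(t-1)^2/(2*t+4) with hF
  set G : ℝ → ℝ := fun t => Real.log t - 6*(t-1)*(t+5)/(2*t+4)^2 with hG
  have hd : ∀ x : ℝ, 0 < x → (2*x+4) ≠ 0 := fun x hx => by nlinarith
  have hFd : ∀ x : ℝ, 0 < x → HasDerivAt F (G x) x := by
    intro x hx
    have h1 : HasDerivAt (fun t : ℝ => t * Real.log t) (Real.log x + 1) x :=
      Real.hasDerivAt_mul_log hx.ne'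
    have h2 : HasDerivAt (fun t : ℝ => 3*(t-1)^2) (6*(x-1)) x := by
      have := ((hasDerivAt_id x).sub_const 1).pow 2
      have := this.const_mul (3:ℝ)
      refine this.congr_deriv ?_; simp only [id_eq]; ring
    have h3 : HasDerivAt (fun t : ℝ => 2*t+4) 2 x := by
      simpa using ((hasDerivAt_id x).const_mul (2:ℝ)).add_const 4
    have h4 : HasDerivAt (fun t : ℝ => 3*(t-1)^2/(2*t+4))
        ((6*(x-1)*(2*x+4) - 3*(x-1)^2*2)/(2*x+4)^2) x := h2.div h3 (hd x hx)
    have h5 := ((h1.sub (hasDerivAt_id x)).add_const 1).sub h4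
    refine h5.congr_deriv ?_
    have e : (6*(x-1)*(2*x+4) - 3*(x-1)^2*2) = 6*(x-1)*(x+5) := by ring
    rw [hG]
    simp only [id_eq]
    rw [← e]
    ring
  have hGd : ∀ x : ℝ, 0 < x → HasDerivAt G (1/x - 216/(2*x+4)^3) x := by
    intro x hx
    have h1 : HasDerivAt Real.log x⁻¹ x := Real.hasDerivAt_log hx.ne'
    have h2 : HasDerivAt (fun t : ℝ => 6*(t-1)*(t+5)) (6*(2*x+4)) x := by
      have := (((hasDerivAt_id x).sub_const 1).const_mul (6:ℝ)).mul
        ((hasDerivAt_id x).add_const 5)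
      refine this.congr_deriv ?_; simp only [id_eq]; ring
    have h3 : HasDerivAt (fun t : ℝ => (2*t+4)^2) (2*(2*x+4)*2) x := by
      have := (((hasDerivAt_id x).const_mul (2:ℝ)).add_const 4).pow 2
      refine this.congr_deriv ?_ <;> simp only [id_eq] <;> ring
    have h4 : HasDerivAt (fun t : ℝ => 6*(t-1)*(t+5)/(2*t+4)^2)
        ((6*(2*x+4)*(2*x+4)^2 - 6*(x-1)*(x+5)*(2*(2*x+4)*2))/((2*x+4)^2)^2) x :=
      h2.div h3 (pow_ne_zero 2 (hd x hx))
    have h5 := h1.sub h4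
    refine h5.congr_deriv ?_
    have h6 := hd x hx
    have e2 : (6*(2*x+4)*(2*x+4)^2 - 6*(x-1)*(x+5)*(2*(2*x+4)*2))/((2*x+4)^2)^2
        = 216/(2*x+4)^3 := by
      field_simp
      ring
    rw [e2, one_div]
  have hG1 : G 1 = 0 := by simp [hG]
  have hGmono : MonotoneOn G (Set.Ioi (0:ℝ)) := by
    apply monotoneOn_of_deriv_nonneg (convex_Ioi 0)
    · exact fun x hx => ((hGd x hx).continuousAt).continuousWithinAt
    · intro x hx
      rw [interior_Ioi] at hx
      exact ((hGd x hx).differentiableAt).differentiableWithinAt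
    · intro x hx
      rw [interior_Ioi] at hx
      rw [(hGd x hx).deriv]
      have h6 := hd x hx
      have hx0 : 0 < x := hx
      have hx4 : (0:ℝ) < 2*x+4 := by linarith
      rw [sub_nonneg, div_le_div_iff₀ (pow_pos hx4 3) hx0]
      nlinarith [mul_nonneg (sq_nonneg (x-1)) (by linarith : (0:ℝ) ≤ x + 8)]
  have hF1 : F 1 = 0 := by simp [hF]
  have key : ∀ x : ℝ, 0 < x → 0 ≤ F x := by
    intro x hx
    rcases le_total x 1 with hx1 | hx1
    · have hanti : AntitoneOn F (Set.Ioc (0:ℝ) 1) := by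
        apply antitoneOn_of_deriv_nonpos (convex_Ioc 0 1)
        · exact fun y hy => ((hFd y hy.1).continuousAt).continuousWithinAt
        · intro y hy
          rw [interior_Ioc] at hy
          exact ((hFd y hy.1).differentiableAt).differentiableWithinAt
        · intro y hy
          rw [interior_Ioc] at hy
          rw [(hFd y hy.1).deriv]
          have := hGmono (Set.mem_Ioi.2 hy.1) (Set.mem_Ioi.2 one_pos) hy.2.le
          rw [hG1] at this
          exact this
      have := hanti (Set.mem_Ioc.2 ⟨hx, hx1⟩) (Set.mem_Ioc.2 ⟨one_pos, le_refl 1⟩) hx1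
      rw [hF1] at this
      exact this
    · have hmono : MonotoneOn F (Set.Ici (1:ℝ)) := by
        apply monotoneOn_of_deriv_nonneg (convex_Ici 1)
        · exact fun y hy => ((hFd y (lt_of_lt_of_le one_pos hy)).continuousAt).continuousWithinAt
        · intro y hy
          rw [interior_Ici] at hy
          exact ((hFd y (lt_trans one_pos hy)).differentiableAt).differentiableWithinAt
        · intro y hy
          rw [interior_Ici] at hy
          rw [(hFd y (lt_trans one_pos hy)).deriv]
          have := hGmono (Set.mem_Ioi.2 one_pos) (Set.mem_Ioi.2 (lt_trans one_pos hy)) hy.le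
          rw [hG1] at this
          exact this
      have := hmono (Set.mem_Ici.2 (le_refl 1)) (Set.mem_Ici.2 hx1) hx1
      rw [hF1] at this
      exact this
  have := key t ht
  rw [hF] at this
  linarith [this]

private lemma keyXY (x y : ℝ) (hx : 0 < x) (hy : 0 < y) :
    3*(x-y)^2/(2*x+4*y) ≤ x * Real.log (x/y) - x + y := by
  have ht : 0 < x / y := div_pos hx hy
  have h := mul_le_mul_of_nonneg_left (keyF (x/y) ht) hy.le
  have hyne : y ≠ 0 := hy.ne'
  have h24 : (0:ℝ) < 2*x+4*y := by linarith
  have e1 : y * (3*(x/y-1)^2/(2*(x/y)+4)) = 3*(x-y)^2/(2*x+4*y) := by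
    field_simp
  have e2 : y * ((x/y) * Real.log (x/y) - (x/y) + 1) = x * Real.log (x/y) - x + y := by
    field_simp
  rw [e1, e2] at h
  exact h

private lemma pinsker_fin {A : Type*} [Fintype A] (p q : A → ℝ)
    (hp : ∀ a, 0 < p a) (hq : ∀ a, 0 < q a)
    (hp1 : ∑ a, p a = 1) (hq1 : ∑ a, q a = 1) :
    (∑ a, |p a - q a|)^2 ≤ 2 * ∑ a, p a * Real.log (p a / q a) := by
  have hw : ∀ a, (0:ℝ) < (2 * p a + 4 * q a) / 3 := fun a => by
    have := hp a; have := hq a; positivity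
  have cs := sum_mul_sq_le_sq_mul_sq univ (fun a => Real.sqrt ((2 * p a + 4 * q a) / 3))
      (fun a => |p a - q a| / Real.sqrt ((2 * p a + 4 * q a) / 3))
  have e1 : ∀ a : A, Real.sqrt ((2 * p a + 4 * q a) / 3) *
      (|p a - q a| / Real.sqrt ((2 * p a + 4 * q a) / 3)) = |p a - q a| := fun a =>
    mul_div_cancel₀ _ (Real.sqrt_ne_zero'.2 (hw a))
  have e2 : ∀ a : A, Real.sqrt ((2 * p a + 4 * q a) / 3) ^ 2 = (2 * p a + 4 * q a) / 3 :=
    fun a => Real.sq_sqrt (hw a).le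
  simp only [e1, e2] at cs
  have e3 : ∑ a, (2 * p a + 4 * q a) / 3 = 2 := by
    rw [← Finset.sum_div, Finset.sum_add_distrib, ← Finset.mul_sum, ← Finset.mul_sum,
      hp1, hq1]
    norm_num
  rw [e3] at cs
  have hb : ∀ a : A, (|p a - q a| / Real.sqrt ((2 * p a + 4 * q a) / 3)) ^ 2
      ≤ p a * Real.log (p a / q a) - p a + q a := by
    intro a
    have := keyXY (p a) (q a) (hp a) (hq a)
    rw [div_pow, e2 a, sq_abs]
    calc (p a - q a)^2 / ((2 * p a + 4 * q a)/3)
        = 3 * (p a - q a)^2 / (2 * p a + 4 * q a) := by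
          rw [div_div_eq_mul_div]; ring_nf
      _ ≤ _ := this
  have hsum : ∑ a, (|p a - q a| / Real.sqrt ((2 * p a + 4 * q a) / 3)) ^ 2
      ≤ ∑ a, p a * Real.log (p a / q a) := by
    calc ∑ a, (|p a - q a| / Real.sqrt ((2 * p a + 4 * q a) / 3)) ^ 2
        ≤ ∑ a, (p a * Real.log (p a / q a) - p a + q a) :=
          Finset.sum_le_sum (fun a _ => hb a)
      _ = ∑ a, p a * Real.log (p a / q a) := by
          rw [Finset.sum_add_distrib, Finset.sum_sub_distrib, hp1, hq1]; ring
  calc (∑ a, |p a - q a|)^2 ≤ 2 * ∑ a, (|p a - q a| / Real.sqrt ((2 * p a + 4 * q a) / 3)) ^ 2 :=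
        cs
    _ ≤ 2 * ∑ a, p a * Real.log (p a / q a) := by linarith

section MatAux
variable {S : Type*} [Fintype S] [DecidableEq S]

private lemma expand_mulVec (γ : ℝ) (Q : Matrix S S ℝ) (w : S → ℝ) (s : S) :
    (((1 : Matrix S S ℝ) - γ • Q) *ᵥ w) s = w s - γ * ∑ s', Q s s' * w s' := by
  rw [Matrix.sub_mulVec, Matrix.smul_mulVec, Matrix.one_mulVec]
  simp [Matrix.mulVec, dotProduct, Finset.mul_sum]

private lemma det_unit [Nonempty S] {γ : ℝ} (hγ0 : 0 < γ) (hγ1 : γ < 1)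
    (Q : Matrix S S ℝ) (hQ0 : ∀ s s', 0 ≤ Q s s') (hQ1 : ∀ s, ∑ s', Q s s' = 1) :
    IsUnit ((1 : Matrix S S ℝ) - γ • Q).det := by
  rw [isUnit_iff_ne_zero]
  intro hdet
  obtain ⟨v, hv0, hv⟩ := Matrix.exists_mulVec_eq_zero_iff.2 hdet
  obtain ⟨s0, -, hs0⟩ := Finset.exists_max_image Finset.univ (fun s => |v s|) univ_nonempty
  have hvs : ∀ s : S, v s = γ * ∑ s', Q s s' * v s' := by
    intro s
    have h := congrFun hv s
    rw [expand_mulVec] at h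
    have : (0:ℝ) = 0 := rfl
    simpa [sub_eq_zero] using h
  have hb : |v s0| ≤ γ * |v s0| := by
    calc |v s0| = γ * |∑ s', Q s0 s' * v s'| := by
          rw [hvs s0, abs_mul, abs_of_pos hγ0]
      _ ≤ γ * ∑ s', Q s0 s' * |v s0| := by
          apply mul_le_mul_of_nonneg_left _ hγ0.le
          calc |∑ s', Q s0 s' * v s'| ≤ ∑ s', |Q s0 s' * v s'| := Finset.abs_sum_le_sum_abs _ _
            _ ≤ ∑ s', Q s0 s' * |v s0| := by
                apply Finset.sum_le_sum
                intro s' _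
                rw [abs_mul, abs_of_nonneg (hQ0 s0 s')]
                exact mul_le_mul_of_nonneg_left (hs0 s' (mem_univ s')) (hQ0 s0 s')
      _ = γ * |v s0| := by rw [← Finset.sum_mul, hQ1 s0, one_mul]
  have hz : |v s0| = 0 := by nlinarith [abs_nonneg (v s0)]
  apply hv0
  funext s
  have := hs0 s (mem_univ s)
  have : |v s| = 0 := le_antisymm (hz ▸ this) (abs_nonneg _)
  simpa using this

private lemma sup_bound [Nonempty S] {γ : ℝ} (hγ0 : 0 < γ) (hγ1 : γ < 1)
    (Q : Matrix S S ℝ) (hQ0 : ∀ s s', 0 ≤ Q s s') (hQ1 : ∀ s, ∑ s', Q s s' = 1)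
    (w g : S → ℝ) (hw : ((1 : Matrix S S ℝ) - γ • Q) *ᵥ w = g)
    (B : ℝ) (hg : ∀ s, |g s| ≤ B) : ∀ s, |w s| ≤ B / (1 - γ) := by
  have h1γ : (0:ℝ) < 1 - γ := by linarith
  obtain ⟨s0, -, hs0⟩ := Finset.exists_max_image Finset.univ (fun s => |w s|) univ_nonempty
  have hws : ∀ s : S, w s = g s + γ * ∑ s', Q s s' * w s' := by
    intro s
    have h := congrFun hw s
    rw [expand_mulVec] at h
    linarith [h]
  have hb : |w s0| ≤ B + γ * |w s0| := by
    calc |w s0| = |g s0 + γ * ∑ s', Q s0 s' * w s'| := by rw [← hws s0]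
      _ ≤ |g s0| + γ * |∑ s', Q s0 s' * w s'| := by
          refine (abs_add_le _ _).trans ?_
          rw [abs_mul, abs_of_pos hγ0]
      _ ≤ B + γ * |w s0| := by
          have : |∑ s', Q s0 s' * w s'| ≤ |w s0| := by
            calc |∑ s', Q s0 s' * w s'| ≤ ∑ s', |Q s0 s' * w s'| := Finset.abs_sum_le_sum_abs _ _
              _ ≤ ∑ s', Q s0 s' * |w s0| := by
                  apply Finset.sum_le_sum
                  intro s' _
                  rw [abs_mul, abs_of_nonneg (hQ0 s0 s')]
                  exact mul_le_mul_of_nonneg_left (hs0 s' (mem_univ s')) (hQ0 s0 s')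
              _ = |w s0| := by rw [← Finset.sum_mul, hQ1 s0, one_mul]
          have := mul_le_mul_of_nonneg_left this hγ0.le
          linarith [hg s0]
  intro s
  rw [le_div_iff₀ h1γ]
  have h1 := hs0 s (mem_univ s)
  nlinarith

end MatAux


/-- State transition matrix induced by policy π: Pπ(s,s') = ∑_a π(a|s) P(s'|s,a). -/
noncomputable def Pmat {S A : Type*} [Fintype S] [Fintype A]
    (P : S → A → S → ℝ) (π : S → A → ℝ) : Matrix S S ℝ :=
  Matrix.of fun s s' => ∑ a, π s a * P s a s'

/-- Expected one-step reward under policy π. -/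
noncomputable def rvec {S A : Type*} [Fintype S] [Fintype A]
    (P : S → A → S → ℝ) (r : S → A → S → ℝ) (π : S → A → ℝ) : S → ℝ :=
  fun s => ∑ a, π s a * ∑ s', P s a s' * r s a s'

/-- Value function V^π = (I − γPπ)⁻¹ rπ (equal to the discounted return series). -/
noncomputable def Vval {S A : Type*} [Fintype S] [Fintype A] [DecidableEq S]
    (γ : ℝ) (P : S → A → S → ℝ) (r : S → A → S → ℝ) (π : S → A → ℝ) : S → ℝ :=
  ((1 : Matrix S S ℝ) - γ • Pmat P π)⁻¹ *ᵥ rvec P r π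

/-- State-action value function Q^π(s,a) = ∑_{s'} P(s'|s,a)(r(s,a,s') + γV^π(s')). -/
noncomputable def Qval {S A : Type*} [Fintype S] [Fintype A] [DecidableEq S]
    (γ : ℝ) (P : S → A → S → ℝ) (r : S → A → S → ℝ) (π : S → A → ℝ) : S → A → ℝ :=
  fun s a => ∑ s', P s a s' * (r s a s' + γ * Vval γ P r π s')

/-- Advantage function A^π = Q^π − V^π. -/
noncomputable def Aval {S A : Type*} [Fintype S] [Fintype A] [DecidableEq S]
    (γ : ℝ) (P : S → A → S → ℝ) (r : S → A → S → ℝ) (π : S → A → ℝ) : S → A → ℝ :=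
  fun s a => Qval γ P r π s a - Vval γ P r π s

/-- Accumulated reward J(π) = E_{s∼ρ}[V^π(s)]. -/
noncomputable def Jval {S A : Type*} [Fintype S] [Fintype A] [DecidableEq S]
    (γ : ℝ) (ρ : S → ℝ) (P : S → A → S → ℝ) (r : S → A → S → ℝ) (π : S → A → ℝ) : ℝ :=
  ∑ s, ρ s * Vval γ P r π s

/-- Discounted state visitation distribution ν^π = (1−γ) ρᵀ(I − γPπ)⁻¹. -/
noncomputable def visit {S A : Type*} [Fintype S] [Fintype A] [DecidableEq S]
    (γ : ℝ) (ρ : S → ℝ) (P : S → A → S → ℝ) (π : S → A → ℝ) : S → ℝ :=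
  (1 - γ) • (ρ ᵥ* ((1 : Matrix S S ℝ) - γ • Pmat P π)⁻¹)

section MDPAux
variable {S A : Type*} [Fintype S] [Fintype A] [DecidableEq S]

private lemma Pmat_nonneg (P : S → A → S → ℝ) (π : S → A → ℝ)
    (hP0 : ∀ s a s', 0 ≤ P s a s') (hπ0 : ∀ s a, 0 ≤ π s a) :
    ∀ s s', 0 ≤ Pmat P π s s' := fun s s' =>
  Finset.sum_nonneg fun a _ => mul_nonneg (hπ0 s a) (hP0 s a s')

private lemma Pmat_rowsum (P : S → A → S → ℝ) (π : S → A → ℝ)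
    (hP1 : ∀ s a, ∑ s', P s a s' = 1) (hπ1 : ∀ s, ∑ a, π s a = 1) :
    ∀ s, ∑ s', Pmat P π s s' = 1 := by
  intro s
  simp only [Pmat, Matrix.of_apply]
  rw [Finset.sum_comm]
  simp only [← Finset.mul_sum, hP1]
  simpa using hπ1 s

private lemma mixQ (γ : ℝ) (P : S → A → S → ℝ) (r : S → A → S → ℝ) (π τ : S → A → ℝ) (s : S) :
    ∑ a, τ s a * Qval γ P r π s a
      = rvec P r τ s + γ * ∑ s', Pmat P τ s s' * Vval γ P r π s' := by
  simp only [Qval, rvec, Pmat, Matrix.of_apply, mul_add, Finset.mul_sum, Finset.sum_add_distrib,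
    Finset.sum_mul]
  congr 1
  rw [Finset.sum_comm]
  apply Finset.sum_congr rfl
  intro a _
  apply Finset.sum_congr rfl
  intro s' _
  ring
end MDPAux

section MDPAux2
variable {S A : Type*} [Fintype S] [Fintype A] [DecidableEq S]

private lemma bellman (γ : ℝ) (P : S → A → S → ℝ) (r : S → A → S → ℝ) (π : S → A → ℝ)
    (hd : IsUnit ((1 : Matrix S S ℝ) - γ • Pmat P π).det) :
    ((1 : Matrix S S ℝ) - γ • Pmat P π) *ᵥ Vval γ P r π = rvec P r π := by
  show ((1 : Matrix S S ℝ) - γ • Pmat P π) *ᵥ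
    (((1 : Matrix S S ℝ) - γ • Pmat P π)⁻¹ *ᵥ rvec P r π) = rvec P r π
  rw [Matrix.mulVec_mulVec, Matrix.mul_nonsing_inv _ hd, Matrix.one_mulVec]

private lemma piAzero (γ : ℝ) (P : S → A → S → ℝ) (r : S → A → S → ℝ) (π : S → A → ℝ)
    (hπ1 : ∀ s, ∑ a, π s a = 1)
    (hd : IsUnit ((1 : Matrix S S ℝ) - γ • Pmat P π).det) (s : S) :
    ∑ a, π s a * Aval γ P r π s a = 0 := by
  have hb := congrFun (bellman γ P r π hd) s
  rw [expand_mulVec] at hb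
  have hm := mixQ γ P r π π s
  simp only [Aval, mul_sub]
  rw [Finset.sum_sub_distrib, hm, ← Finset.sum_mul, hπ1 s, one_mul]
  linarith

private lemma visit_sum (γ : ℝ) (hγ1 : γ < 1) (ρ : S → ℝ) (hρ1 : ∑ s, ρ s = 1)
    (P : S → A → S → ℝ) (π : S → A → ℝ)
    (hQ1 : ∀ s, ∑ s', Pmat P π s s' = 1)
    (hd : IsUnit ((1 : Matrix S S ℝ) - γ • Pmat P π).det) :
    ∑ s, visit γ ρ P π s = 1 := by
  have h1γ : (1:ℝ) - γ ≠ 0 := by intro h; linarith [h.symm.le]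
  have h0 : ((1 : Matrix S S ℝ) - γ • Pmat P π) *ᵥ (fun _ => (1-γ)⁻¹) = fun _ => (1:ℝ) := by
    funext s
    rw [expand_mulVec]
    rw [← Finset.sum_mul, hQ1 s, one_mul]
    field_simp
  have h2 : ((1 : Matrix S S ℝ) - γ • Pmat P π)⁻¹ *ᵥ (fun _ => (1:ℝ))
      = fun _ => (1-γ)⁻¹ := by
    rw [← h0, Matrix.mulVec_mulVec, Matrix.nonsing_inv_mul _ hd, Matrix.one_mulVec]
  have h3 : ∑ s, visit γ ρ P π s
      = (1-γ) * ((ρ ᵥ* ((1 : Matrix S S ℝ) - γ • Pmat P π)⁻¹) ⬝ᵥ (fun _ => (1:ℝ))) := by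
    simp [visit, dotProduct, Finset.mul_sum]
  rw [h3, ← Matrix.dotProduct_mulVec, h2]
  have h4 : ρ ⬝ᵥ (fun _ => (1-γ)⁻¹) = (1-γ)⁻¹ := by
    simp [dotProduct, ← Finset.sum_mul, hρ1]
  rw [h4]
  field_simp
end MDPAux2

/-- Lower bound on the performance difference with a KL penalty (Lemma 5.4 with
D²_{τ,1} = E_{ν^π}[D_KL(π‖π')]): J(π') − J(π) ≥
(1/(1−γ)) E_{ν^π,π'}[A^π] − (2γA_max/((1−γ)²ε)) E_{ν^π}[D_KL(π(·|s)‖π'(·|s))]. -/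
theorem performance_lower_bound_kl {S A : Type*} [Fintype S] [Fintype A] [DecidableEq S]
    [Nonempty S] [Nonempty A]
    (γ : ℝ) (hγ0 : 0 < γ) (hγ1 : γ < 1)
    (ρ : S → ℝ) (hρ0 : ∀ s, 0 ≤ ρ s) (hρ1 : ∑ s, ρ s = 1)
    (P : S → A → S → ℝ) (hP0 : ∀ s a s', 0 ≤ P s a s') (hP1 : ∀ s a, ∑ s', P s a s' = 1)
    (r : S → A → S → ℝ) (rmax : ℝ) (hr0 : ∀ s a s', 0 ≤ r s a s')
    (hr1 : ∀ s a s', r s a s' ≤ rmax)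
    (π π' : S → A → ℝ)
    (hπ0 : ∀ s a, 0 < π s a) (hπ1 : ∀ s, ∑ a, π s a = 1)
    (hπ'0 : ∀ s a, 0 < π' s a) (hπ'1 : ∀ s, ∑ a, π' s a = 1)
    (Amax : ℝ) (hA : ∀ s a, |Aval γ P r π s a| ≤ Amax)
    (ε : ℝ) (hε : 0 < ε) (hν : ∀ s, ε ≤ visit γ ρ P π s) :
    Jval γ ρ P r π' - Jval γ ρ P r π ≥
      (1 / (1 - γ)) * (∑ s, visit γ ρ P π s * ∑ a, π' s a * Aval γ P r π s a) -
        (2 * γ * Amax / ((1 - γ) ^ 2 * ε)) *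
          ∑ s, visit γ ρ P π s * ∑ a, π s a * Real.log (π s a / π' s a) := by
  classical
  have h1γ : (0:ℝ) < 1 - γ := by linarith
  have hPm0 := Pmat_nonneg P π hP0 (fun s a => (hπ0 s a).le)
  have hPm1 := Pmat_rowsum P π hP1 hπ1
  have hPm'0 := Pmat_nonneg P π' hP0 (fun s a => (hπ'0 s a).le)
  have hPm'1 := Pmat_rowsum P π' hP1 hπ'1
  have hdM : IsUnit ((1 : Matrix S S ℝ) - γ • Pmat P π).det := det_unit hγ0 hγ1 _ hPm0 hPm1
  have hdM' : IsUnit ((1 : Matrix S S ℝ) - γ • Pmat P π').det := det_unit hγ0 hγ1 _ hPm'0 hPm'1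
  have hν0 : ∀ s, 0 ≤ visit γ ρ P π s := fun s => le_trans hε.le (hν s)
  have hνsum : ∑ s, visit γ ρ P π s = 1 := visit_sum γ hγ1 ρ hρ1 P π hPm1 hdM
  -- step 1 : Bellman-type identity for the difference
  have hkey : ((1 : Matrix S S ℝ) - γ • Pmat P π') *ᵥ (Vval γ P r π' - Vval γ P r π)
      = fun s => ∑ a, π' s a * Aval γ P r π s a := by
    funext s
    rw [expand_mulVec]
    have hb' := congrFun (bellman γ P r π' hdM') s
    rw [expand_mulVec] at hb'
    have hm := mixQ γ P r π π' s
    have e1 : ∑ s', Pmat P π' s s' * (Vval γ P r π' s' - Vval γ P r π s')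
        = (∑ s', Pmat P π' s s' * Vval γ P r π' s')
          - ∑ s', Pmat P π' s s' * Vval γ P r π s' := by
      simp [mul_sub, Finset.sum_sub_distrib]
    have e2 : ∑ a, π' s a * Aval γ P r π s a
        = (∑ a, π' s a * Qval γ P r π s a) - Vval γ P r π s := by
      simp only [Aval, mul_sub]
      rw [Finset.sum_sub_distrib, ← Finset.sum_mul, hπ'1 s, one_mul]
    simp only [Pi.sub_apply]
    rw [e1, e2, hm]
    linarith [hb']
  -- step 2 : rewrite via the π-resolvent
  have hMw : ((1 : Matrix S S ℝ) - γ • Pmat P π) *ᵥ (Vval γ P r π' - Vval γ P r π)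
      = (fun s => ∑ a, π' s a * Aval γ P r π s a)
        + γ • ((Pmat P π' - Pmat P π) *ᵥ (Vval γ P r π' - Vval γ P r π)) := by
    have hMM' : ((1 : Matrix S S ℝ) - γ • Pmat P π)
        = ((1 : Matrix S S ℝ) - γ • Pmat P π') + γ • (Pmat P π' - Pmat P π) := by
      rw [smul_sub]; abel
    rw [hMM', Matrix.add_mulVec, hkey, Matrix.smul_mulVec]
  have hw_eq : Vval γ P r π' - Vval γ P r π
      = ((1 : Matrix S S ℝ) - γ • Pmat P π)⁻¹ *ᵥ
        ((fun s => ∑ a, π' s a * Aval γ P r π s a)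
          + γ • ((Pmat P π' - Pmat P π) *ᵥ (Vval γ P r π' - Vval γ P r π))) := by
    rw [← hMw, Matrix.mulVec_mulVec, Matrix.nonsing_inv_mul _ hdM, Matrix.one_mulVec]
  -- step 3 : expression for J' - J
  have hρM : ∀ s, (ρ ᵥ* ((1 : Matrix S S ℝ) - γ • Pmat P π)⁻¹) s
      = visit γ ρ P π s / (1 - γ) := by
    intro s
    rw [eq_div_iff h1γ.ne']
    simp [visit, mul_comm]
  have hJ3 : Jval γ ρ P r π' - Jval γ ρ P r π
      = (1/(1-γ)) * (∑ s, visit γ ρ P π s * ∑ a, π' s a * Aval γ P r π s a)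
        + (γ/(1-γ)) * ∑ s, visit γ ρ P π s *
            ((Pmat P π' - Pmat P π) *ᵥ (Vval γ P r π' - Vval γ P r π)) s := by
    have hJ : Jval γ ρ P r π' - Jval γ ρ P r π
        = ∑ s, ρ s * (Vval γ P r π' - Vval γ P r π) s := by
      simp only [Jval, Pi.sub_apply, mul_sub, Finset.sum_sub_distrib]
    have hdp : ∑ s, ρ s * (Vval γ P r π' - Vval γ P r π) s
        = ∑ s, (ρ ᵥ* ((1 : Matrix S S ℝ) - γ • Pmat P π)⁻¹) s *
            ((∑ a, π' s a * Aval γ P r π s a)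
              + γ * ((Pmat P π' - Pmat P π) *ᵥ (Vval γ P r π' - Vval γ P r π)) s) := by
      have hrfl : ∑ s, ρ s * (Vval γ P r π' - Vval γ P r π) s
          = ρ ⬝ᵥ (Vval γ P r π' - Vval γ P r π) := rfl
      have hid : ρ ⬝ᵥ (Vval γ P r π' - Vval γ P r π)
          = (ρ ᵥ* ((1 : Matrix S S ℝ) - γ • Pmat P π)⁻¹) ⬝ᵥ
            (((1 : Matrix S S ℝ) - γ • Pmat P π) *ᵥ (Vval γ P r π' - Vval γ P r π)) := by
        rw [Matrix.dotProduct_mulVec, Matrix.vecMul_vecMul, Matrix.nonsing_inv_mul _ hdM,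
          Matrix.vecMul_one]
      rw [hrfl, hid, hMw]
      simp [dotProduct, Pi.add_apply, Pi.smul_apply, smul_eq_mul]
    rw [hJ, hdp, Finset.mul_sum, Finset.mul_sum, ← Finset.sum_add_distrib]
    apply Finset.sum_congr rfl
    intro s _
    rw [hρM s]
    field_simp
  -- step 4 : bounds
  have hAmax0 : 0 ≤ Amax :=
    le_trans (abs_nonneg _) (hA (Classical.arbitrary S) (Classical.arbitrary A))
  have hℓ0 : ∀ s, (0:ℝ) ≤ ∑ a, |π s a - π' s a| :=
    fun s => Finset.sum_nonneg fun a _ => abs_nonneg _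
  have hK0 : (0:ℝ) ≤ ∑ s, visit γ ρ P π s * ∑ a, |π s a - π' s a| :=
    Finset.sum_nonneg fun s _ => mul_nonneg (hν0 s) (hℓ0 s)
  have hℓK : ∀ s, (∑ a, |π s a - π' s a|)
      ≤ (∑ s, visit γ ρ P π s * ∑ a, |π s a - π' s a|) / ε := by
    intro s
    rw [le_div_iff₀ hε]
    calc (∑ a, |π s a - π' s a|) * ε ≤ (∑ a, |π s a - π' s a|) * visit γ ρ P π s :=
          mul_le_mul_of_nonneg_left (hν s) (hℓ0 s)
      _ = visit γ ρ P π s * ∑ a, |π s a - π' s a| := mul_comm _ _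
      _ ≤ _ := Finset.single_le_sum
          (f := fun s => visit γ ρ P π s * ∑ a, |π s a - π' s a|)
          (fun i _ => mul_nonneg (hν0 i) (hℓ0 i)) (mem_univ s)
  have hgA : ∀ s, |∑ a, π' s a * Aval γ P r π s a| ≤ Amax * ∑ a, |π s a - π' s a| := by
    intro s
    have hz := piAzero γ P r π hπ1 hdM s
    have hgs : ∑ a, π' s a * Aval γ P r π s a
        = ∑ a, (π' s a - π s a) * Aval γ P r π s a := by
      simp only [sub_mul, Finset.sum_sub_distrib, hz, sub_zero]
    rw [hgs]
    calc |∑ a, (π' s a - π s a) * Aval γ P r π s a|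
        ≤ ∑ a, |(π' s a - π s a) * Aval γ P r π s a| := Finset.abs_sum_le_sum_abs _ _
      _ ≤ ∑ a, |π s a - π' s a| * Amax := by
          apply Finset.sum_le_sum
          intro a _
          rw [abs_mul, abs_sub_comm]
          exact mul_le_mul_of_nonneg_left (hA s a) (abs_nonneg _)
      _ = Amax * ∑ a, |π s a - π' s a| := by rw [← Finset.sum_mul, mul_comm]
  have hgB : ∀ s, |∑ a, π' s a * Aval γ P r π s a|
      ≤ Amax * ((∑ s, visit γ ρ P π s * ∑ a, |π s a - π' s a|) / ε) :=
    fun s => (hgA s).trans (mul_le_mul_of_nonneg_left (hℓK s) hAmax0)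
  have hwB : ∀ s, |(Vval γ P r π' - Vval γ P r π) s|
      ≤ (Amax * ((∑ s, visit γ ρ P π s * ∑ a, |π s a - π' s a|) / ε)) / (1 - γ) :=
    sup_bound hγ0 hγ1 _ hPm'0 hPm'1 _ _ hkey _ hgB
  have huB : ∀ s, |((Pmat P π' - Pmat P π) *ᵥ (Vval γ P r π' - Vval γ P r π)) s|
      ≤ (∑ a, |π s a - π' s a|) *
        ((Amax * ((∑ s, visit γ ρ P π s * ∑ a, |π s a - π' s a|) / ε)) / (1 - γ)) := by
    intro s
    have hus : ((Pmat P π' - Pmat P π) *ᵥ (Vval γ P r π' - Vval γ P r π)) s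
        = ∑ a, (π' s a - π s a) * ∑ s', P s a s' * (Vval γ P r π' - Vval γ P r π) s' := by
      simp only [Matrix.mulVec, dotProduct, Matrix.sub_apply, Pmat, Matrix.of_apply,
        ← Finset.sum_sub_distrib, Finset.sum_mul]
      rw [Finset.sum_comm]
      apply Finset.sum_congr rfl
      intro a _
      rw [Finset.mul_sum]
      apply Finset.sum_congr rfl
      intro s' _
      ring
    rw [hus]
    calc |∑ a, (π' s a - π s a) * ∑ s', P s a s' * (Vval γ P r π' - Vval γ P r π) s'|
        ≤ ∑ a, |(π' s a - π s a) * ∑ s', P s a s' * (Vval γ P r π' - Vval γ P r π) s'| :=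
          Finset.abs_sum_le_sum_abs _ _
      _ ≤ ∑ a, |π s a - π' s a| *
            ((Amax * ((∑ s, visit γ ρ P π s * ∑ a, |π s a - π' s a|) / ε)) / (1 - γ)) := by
          apply Finset.sum_le_sum
          intro a _
          rw [abs_mul, abs_sub_comm]
          apply mul_le_mul_of_nonneg_left _ (abs_nonneg _)
          calc |∑ s', P s a s' * (Vval γ P r π' - Vval γ P r π) s'|
              ≤ ∑ s', |P s a s' * (Vval γ P r π' - Vval γ P r π) s'| :=
                Finset.abs_sum_le_sum_abs _ _
            _ ≤ ∑ s', P s a s' *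
                  ((Amax * ((∑ s, visit γ ρ P π s * ∑ a, |π s a - π' s a|) / ε)) / (1 - γ)) := by
                apply Finset.sum_le_sum
                intro s' _
                rw [abs_mul, abs_of_nonneg (hP0 s a s')]
                exact mul_le_mul_of_nonneg_left (hwB s') (hP0 s a s')
            _ = _ := by rw [← Finset.sum_mul, hP1 s a, one_mul]
      _ = _ := by rw [← Finset.sum_mul]
  have hsum_u : ∑ s, visit γ ρ P π s *
        ((Pmat P π' - Pmat P π) *ᵥ (Vval γ P r π' - Vval γ P r π)) s
      ≥ -((∑ s, visit γ ρ P π s * ∑ a, |π s a - π' s a|) *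
          ((Amax * ((∑ s, visit γ ρ P π s * ∑ a, |π s a - π' s a|) / ε)) / (1 - γ))) := by
    rw [ge_iff_le, Finset.sum_mul, ← Finset.sum_neg_distrib]
    apply Finset.sum_le_sum
    intro s _
    rw [mul_assoc, neg_mul_eq_mul_neg]
    apply mul_le_mul_of_nonneg_left _ (hν0 s)
    have := (abs_le.1 (huB s)).1
    linarith
  -- step 5 : Jensen + Pinsker
  have hjensen : (∑ s, visit γ ρ P π s * ∑ a, |π s a - π' s a|)^2
      ≤ ∑ s, visit γ ρ P π s * (∑ a, |π s a - π' s a|)^2 := by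
    have cs := sum_mul_sq_le_sq_mul_sq univ (fun s => Real.sqrt (visit γ ρ P π s))
      (fun s => Real.sqrt (visit γ ρ P π s) * ∑ a, |π s a - π' s a|)
    have e1 : ∀ s : S, Real.sqrt (visit γ ρ P π s) *
        (Real.sqrt (visit γ ρ P π s) * ∑ a, |π s a - π' s a|)
        = visit γ ρ P π s * ∑ a, |π s a - π' s a| := by
      intro s
      rw [← mul_assoc, Real.mul_self_sqrt (hν0 s)]
    have e2 : ∀ s : S, Real.sqrt (visit γ ρ P π s) ^ 2 = visit γ ρ P π s :=
      fun s => Real.sq_sqrt (hν0 s)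
    have e3 : ∀ s : S, (Real.sqrt (visit γ ρ P π s) * ∑ a, |π s a - π' s a|) ^ 2
        = visit γ ρ P π s * (∑ a, |π s a - π' s a|)^2 := by
      intro s
      rw [mul_pow, e2 s]
    simp only [e1, e2, e3] at cs
    rwa [hνsum, one_mul] at cs
  have hpin : ∀ s : S, (∑ a, |π s a - π' s a|)^2
      ≤ 2 * ∑ a, π s a * Real.log (π s a / π' s a) :=
    fun s => pinsker_fin (π s) (π' s) (hπ0 s) (hπ'0 s) (hπ1 s) (hπ'1 s)
  have hKKL : (∑ s, visit γ ρ P π s * ∑ a, |π s a - π' s a|)^2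
      ≤ 2 * ∑ s, visit γ ρ P π s * ∑ a, π s a * Real.log (π s a / π' s a) := by
    calc (∑ s, visit γ ρ P π s * ∑ a, |π s a - π' s a|)^2
        ≤ ∑ s, visit γ ρ P π s * (∑ a, |π s a - π' s a|)^2 := hjensen
      _ ≤ ∑ s, visit γ ρ P π s * (2 * ∑ a, π s a * Real.log (π s a / π' s a)) :=
          Finset.sum_le_sum fun s _ => mul_le_mul_of_nonneg_left (hpin s) (hν0 s)
      _ = 2 * ∑ s, visit γ ρ P π s * ∑ a, π s a * Real.log (π s a / π' s a) := by
          rw [Finset.mul_sum]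
          apply Finset.sum_congr rfl
          intro s _
          ring
  -- step 6 : conclusion
  have hKL0 : (0:ℝ) ≤ ∑ s, visit γ ρ P π s * ∑ a, π s a * Real.log (π s a / π' s a) := by
    nlinarith [hKKL, sq_nonneg (∑ s, visit γ ρ P π s * ∑ a, |π s a - π' s a|)]
  rw [hJ3]
  have hfin : (γ/(1-γ)) * ∑ s, visit γ ρ P π s *
        ((Pmat P π' - Pmat P π) *ᵥ (Vval γ P r π' - Vval γ P r π)) s
      ≥ -((2 * γ * Amax / ((1 - γ) ^ 2 * ε)) *
          ∑ s, visit γ ρ P π s * ∑ a, π s a * Real.log (π s a / π' s a)) := by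
    have hc0 : (0:ℝ) ≤ γ/(1-γ) := div_nonneg hγ0.le h1γ.le
    have h1 := mul_le_mul_of_nonneg_left hsum_u hc0
    have h2 : (γ/(1-γ)) * (-((∑ s, visit γ ρ P π s * ∑ a, |π s a - π' s a|) *
          ((Amax * ((∑ s, visit γ ρ P π s * ∑ a, |π s a - π' s a|) / ε)) / (1 - γ))))
        = -((γ * Amax / ((1-γ)^2 * ε)) *
          (∑ s, visit γ ρ P π s * ∑ a, |π s a - π' s a|)^2) := by
      field_simp
    rw [h2] at h1
    have h3 : (γ * Amax / ((1-γ)^2 * ε)) *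
          (∑ s, visit γ ρ P π s * ∑ a, |π s a - π' s a|)^2
        ≤ (γ * Amax / ((1-γ)^2 * ε)) *
          (2 * ∑ s, visit γ ρ P π s * ∑ a, π s a * Real.log (π s a / π' s a)) := by
      apply mul_le_mul_of_nonneg_left hKKL
      positivity
    have h4 : (γ * Amax / ((1-γ)^2 * ε)) *
          (2 * ∑ s, visit γ ρ P π s * ∑ a, π s a * Real.log (π s a / π' s a))
        = (2 * γ * Amax / ((1 - γ) ^ 2 * ε)) *
          ∑ s, visit γ ρ P π s * ∑ a, π s a * Real.log (π s a / π' s a) := by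
      ring
    rw [ge_iff_le, neg_le]
    linarith [h1, h3, h4]
  linarith [hfin]
end
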